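/- For a prime p > 17: either p = a² + 17b² or 2p = a² + 17b² holds for some positive integers a, b if and only if p ≡ (2j+1)² (mod 68) for some j ∈ {0, 1, ..., 7}. -/

import Mathlib

set_option maxRecDepth 40000
set_option synthInstance.maxSize 4000
set_option maxHeartbeats 1000000

private lemma rep_mod (a b n : ℕ) :
    ((a % n) ^ 2 + 17 * (b % n) ^ 2) % n = (a ^ 2 + 17 * b ^ 2) % n := by
  have mm : ∀ x : ℕ, x % n % n = x % n := fun x => Nat.mod_mod_of_dvd x dvd_rfl
  conv_rhs => rw [Nat.add_mod, Nat.pow_mod a, Nat.mul_mod, Nat.pow_mod b]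
  conv_lhs => rw [Nat.add_mod, Nat.pow_mod (a % n), Nat.mul_mod, Nat.pow_mod (b % n)]
  rw [mm a, mm b]

private lemma aux17 (c : ℕ)
    (hc : c = 1 ∨ c = 2 ∨ c = 4 ∨ c = 8 ∨ c = 9 ∨ c = 13 ∨ c = 15 ∨ c = 16) :
    ∀ k < 9, ∀ α < 17, 0 < k → (c * k) % 17 = α ^ 2 % 17 →
      (k = 1 ∨ k = 2 ∨ k = 4 ∨ k = 8) := by
  rcases hc with rfl|rfl|rfl|rfl|rfl|rfl|rfl|rfl <;> decide

private lemma aux8 : ∀ x < 8, ∀ y < 8,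
    ((x ^ 2 + 17 * y ^ 2) % 8 = 4 ∨ (x ^ 2 + 17 * y ^ 2) % 8 = 0) →
    x % 2 = 0 ∧ y % 2 = 0 := by decide

private lemma thue_aux {p : ℕ} [hpf : Fact p.Prime] (A B : ℕ) (hAB : p < (A + 1) * (B + 1))
    (r : ZMod p) :
    ∃ a b : ℤ, ((a : ZMod p) = r * (b : ZMod p)) ∧ a.natAbs ≤ A ∧ b.natAbs ≤ B ∧
      ¬(a = 0 ∧ b = 0) := by
  have hcard : Fintype.card (ZMod p) < Fintype.card (Fin (A + 1) × Fin (B + 1)) := by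
    simpa [ZMod.card] using hAB
  obtain ⟨u, v, huv, h⟩ := Fintype.exists_ne_map_eq_of_card_lt
    (fun z : Fin (A + 1) × Fin (B + 1) =>
      ((z.1 : ℕ) : ZMod p) - r * ((z.2 : ℕ) : ZMod p)) hcard
  refine ⟨((u.1 : ℕ) : ℤ) - ((v.1 : ℕ) : ℤ), ((u.2 : ℕ) : ℤ) - ((v.2 : ℕ) : ℤ), ?_, ?_, ?_, ?_⟩
  · push_cast
    linear_combination h
  · have h1 := u.1.isLt; have h2 := v.1.isLt; omega
  · have h1 := u.2.isLt; have h2 := v.2.isLt; omega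
  · rintro ⟨ha, hb⟩
    apply huv
    have e1 : (u.1 : ℕ) = (v.1 : ℕ) := by omega
    have e2 : (u.2 : ℕ) = (v.2 : ℕ) := by omega
    exact Prod.ext (Fin.ext e1) (Fin.ext e2)

theorem stmt_16 (p : ℕ) (hp : p.Prime) (hp17 : 17 < p) :
    ((∃ a b : ℕ, 0 < a ∧ 0 < b ∧ p = a ^ 2 + 17 * b ^ 2) ∨
     (∃ a b : ℕ, 0 < a ∧ 0 < b ∧ 2 * p = a ^ 2 + 17 * b ^ 2)) ↔
    (∃ j ≤ 7, p % 68 = (2 * j + 1) ^ 2 % 68) := by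
  have hodd : p % 2 = 1 := Nat.odd_iff.mp (hp.odd_of_ne_two (by omega))
  have hne17 : p % 17 ≠ 0 := by
    intro h
    rcases (Nat.Prime.eq_one_or_self_of_dvd hp 17 (Nat.dvd_of_mod_eq_zero h)) with h' | h' <;> omega
  constructor
  · rintro (⟨a, b, ha, hb, hab⟩ | ⟨a, b, ha, hb, hab⟩)
    · have key : ∀ x < 68, ∀ y < 68, (x ^ 2 + 17 * y ^ 2) % 2 = 1 →
          (x ^ 2 + 17 * y ^ 2) % 17 ≠ 0 →
          ∃ j < 8, (x ^ 2 + 17 * y ^ 2) % 68 = (2 * j + 1) ^ 2 % 68 := by decide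
      have hmod : ((a % 68) ^ 2 + 17 * (b % 68) ^ 2) % 68 = p % 68 := by
        rw [rep_mod, hab]
      have hc2 : ((a % 68) ^ 2 + 17 * (b % 68) ^ 2) % 2 = 1 := by
        have := Nat.mod_mod_of_dvd ((a % 68) ^ 2 + 17 * (b % 68) ^ 2) (by norm_num : 2 ∣ 68)
        omega
      have hc17 : ((a % 68) ^ 2 + 17 * (b % 68) ^ 2) % 17 ≠ 0 := by
        have := Nat.mod_mod_of_dvd ((a % 68) ^ 2 + 17 * (b % 68) ^ 2) (by norm_num : 17 ∣ 68)
        omega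
      obtain ⟨j, hj, hjeq⟩ := key (a % 68) (Nat.mod_lt _ (by norm_num)) (b % 68)
        (Nat.mod_lt _ (by norm_num)) hc2 hc17
      exact ⟨j, by omega, by omega⟩
    · have key : ∀ x < 136, ∀ y < 136, (x ^ 2 + 17 * y ^ 2) % 4 = 2 →
          (x ^ 2 + 17 * y ^ 2) % 17 ≠ 0 →
          ∃ j < 8, (x ^ 2 + 17 * y ^ 2) % 136 / 2 = (2 * j + 1) ^ 2 % 68 := by decide
      have hmod : ((a % 136) ^ 2 + 17 * (b % 136) ^ 2) % 136 = (2 * p) % 136 := by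
        rw [rep_mod, hab]
      have hc2 : ((a % 136) ^ 2 + 17 * (b % 136) ^ 2) % 4 = 2 := by
        have := Nat.mod_mod_of_dvd ((a % 136) ^ 2 + 17 * (b % 136) ^ 2) (by norm_num : 4 ∣ 136)
        omega
      have hc17 : ((a % 136) ^ 2 + 17 * (b % 136) ^ 2) % 17 ≠ 0 := by
        have := Nat.mod_mod_of_dvd ((a % 136) ^ 2 + 17 * (b % 136) ^ 2) (by norm_num : 17 ∣ 136)
        omega
      obtain ⟨j, hj, hjeq⟩ := key (a % 136) (Nat.mod_lt _ (by norm_num)) (b % 136)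
        (Nat.mod_lt _ (by norm_num)) hc2 hc17
      exact ⟨j, by omega, by omega⟩
  · rintro ⟨j, hj, hjeq⟩
    have h68 : p % 68 = 1 ∨ p % 68 = 9 ∨ p % 68 = 13 ∨ p % 68 = 21 ∨ p % 68 = 25 ∨
        p % 68 = 33 ∨ p % 68 = 49 ∨ p % 68 = 53 := by
      interval_cases j <;> omega
    have h4 : p % 4 = 1 := by omega
    have h17 : p % 17 = 1 ∨ p % 17 = 2 ∨ p % 17 = 4 ∨ p % 17 = 8 ∨ p % 17 = 9 ∨
        p % 17 = 13 ∨ p % 17 = 15 ∨ p % 17 = 16 := by omega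
    haveI : Fact p.Prime := ⟨hp⟩
    haveI : Fact (Nat.Prime 17) := ⟨by norm_num⟩
    have hsq17 : IsSquare ((17 : ℕ) : ZMod p) := by
      rw [ZMod.exists_sq_eq_prime_iff_of_mod_four_eq_one h4 (by norm_num : (17 : ℕ) ≠ 2)]
      rw [← ZMod.natCast_mod p 17]
      rcases h17 with h|h|h|h|h|h|h|h <;> rw [h] <;> decide +revert
    have hsqneg : IsSquare (-1 : ZMod p) := ZMod.exists_sq_eq_neg_one_iff.mpr (by omega)
    have hsq : IsSquare (-17 : ZMod p) := by
      have h := hsqneg.mul hsq17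
      have e : (-1 : ZMod p) * ((17 : ℕ) : ZMod p) = -17 := by push_cast; ring
      rwa [e] at h
    obtain ⟨r, hr⟩ := hsq
    set A := Nat.sqrt (4 * p) with hAdef
    set B := Nat.sqrt (p / 4) with hBdef
    have hA : A ^ 2 ≤ 4 * p := Nat.sqrt_le' (4 * p)
    have hA1 : 4 * p < (A + 1) ^ 2 := Nat.lt_succ_sqrt' (4 * p)
    have hB : B ^ 2 ≤ p / 4 := Nat.sqrt_le' (p / 4)
    have hB1 : p / 4 < (B + 1) ^ 2 := Nat.lt_succ_sqrt' (p / 4)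
    have hq1 : p ≤ 4 * (p / 4) + 3 := by omega
    have hq2 : 4 * (p / 4) ≤ p := by omega
    have hp0 : 0 < p := by omega
    have hAB : p < (A + 1) * (B + 1) := by
      by_contra hcon
      push_neg at hcon
      have h2 : ((A + 1) * (B + 1)) ^ 2 ≤ p ^ 2 := Nat.pow_le_pow_left hcon 2
      have h3 : (4 * p + 1) * (p / 4 + 1) ≤ (A + 1) ^ 2 * (B + 1) ^ 2 :=
        Nat.mul_le_mul hA1 hB1
      have h4' : (A + 1) ^ 2 * (B + 1) ^ 2 = ((A + 1) * (B + 1)) ^ 2 := by ring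
      have h5 : p * p < (4 * p + 1) * (p / 4 + 1) := by nlinarith [hq1, hp0]
      have h6 : p ^ 2 = p * p := sq p
      omega
    obtain ⟨a, b, hab, haA, hbB, hne⟩ := thue_aux A B hAB r
    set α := a.natAbs with hαdef
    set β := b.natAbs with hβdef
    have hdvd : (p : ℤ) ∣ (a ^ 2 + 17 * b ^ 2) := by
      rw [← ZMod.intCast_zmod_eq_zero_iff_dvd]
      push_cast
      rw [hab]
      linear_combination (-((b : ZMod p)) ^ 2) * hr
    have hdvds : p ∣ (α ^ 2 + 17 * β ^ 2) := by
      have hcast : ((α ^ 2 + 17 * β ^ 2 : ℕ) : ℤ) = a ^ 2 + 17 * b ^ 2 := by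
        push_cast [hαdef, hβdef]
        rw [sq_abs, sq_abs]
      exact Int.natCast_dvd_natCast.mp (by rw [hcast]; exact hdvd)
    obtain ⟨k, hk⟩ := hdvds
    have hbound : 4 * (α ^ 2 + 17 * β ^ 2) ≤ 33 * p := by
      have h1 : α ^ 2 ≤ 4 * p := by
        calc α ^ 2 ≤ A ^ 2 := Nat.pow_le_pow_left haA 2
        _ ≤ 4 * p := hA
      have h2 : β ^ 2 ≤ p / 4 := by
        calc β ^ 2 ≤ B ^ 2 := Nat.pow_le_pow_left hbB 2
        _ ≤ p / 4 := hB
      have h3 : 68 * β ^ 2 ≤ 68 * (p / 4) := by omega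
      have h4' : 68 * (p / 4) ≤ 17 * p := by omega
      nlinarith [h1]
    have hk8 : k ≤ 8 := by
      by_contra hcon
      push_neg at hcon
      have : p * 9 ≤ p * k := Nat.mul_le_mul_left p hcon
      omega
    have hk1 : 1 ≤ k := by
      rcases Nat.eq_zero_or_pos k with h0 | h0
      · exfalso
        rw [h0, Nat.mul_zero, Nat.add_eq_zero] at hk
        have hα0 : α = 0 := by
          exact (pow_eq_zero_iff two_ne_zero).mp hk.1
        have hβ0 : β = 0 := by
          have h17β : β ^ 2 = 0 := by omega
          exact (pow_eq_zero_iff two_ne_zero).mp h17β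
        exact hne ⟨Int.natAbs_eq_zero.mp hα0, Int.natAbs_eq_zero.mp hβ0⟩
      · exact h0
    -- α ≠ 0 and β ≠ 0
    have hα0 : α ≠ 0 := by
      intro h0
      have hzero : α ^ 2 = 0 := by rw [h0]; ring
      have hd : p ∣ 17 * β ^ 2 := ⟨k, by omega⟩
      have hpβ : p ∣ β := by
        rcases (hp.dvd_mul).mp hd with h' | h'
        · have := Nat.le_of_dvd (by norm_num) h'; omega
        · exact hp.dvd_of_dvd_pow h'
      have hβne : 0 < β := by
        rcases Nat.eq_zero_or_pos β with hb0 | hb0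
        · exfalso
          have hz2 : β ^ 2 = 0 := by rw [hb0]; ring
          have hple : p ≤ p * k := Nat.le_mul_of_pos_right p (by omega)
          omega
        · exact hb0
      have hpleβ : p ≤ β := Nat.le_of_dvd hβne hpβ
      have hsq' : p * p ≤ β ^ 2 := by nlinarith
      nlinarith [hbound, hp17, hzero]
    have hβ0 : β ≠ 0 := by
      intro h0
      have hzero : β ^ 2 = 0 := by rw [h0]; ring
      have hd : p ∣ α ^ 2 := ⟨k, by omega⟩
      have hpα : p ∣ α := hp.dvd_of_dvd_pow hd
      have hαne : 0 < α := by
        rcases Nat.eq_zero_or_pos α with ha0 | ha0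
        · exfalso
          have hz2 : α ^ 2 = 0 := by rw [ha0]; ring
          have hple : p ≤ p * k := Nat.le_mul_of_pos_right p (by omega)
          omega
        · exact ha0
      have hpleα : p ≤ α := Nat.le_of_dvd hαne hpα
      have hsq' : p * p ≤ α ^ 2 := by nlinarith
      nlinarith [hbound, hp17, hzero]
    have hαpos : 0 < α := Nat.pos_of_ne_zero hα0
    have hβpos : 0 < β := Nat.pos_of_ne_zero hβ0
    -- mod 17 analysis
    have hc17 : (p % 17 * k) % 17 = (α % 17) ^ 2 % 17 := by
      have e1 : (α ^ 2 + 17 * β ^ 2) % 17 = α ^ 2 % 17 := by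
        have := Nat.add_mul_mod_self_left (α ^ 2) 17 (β ^ 2)
        omega
      calc (p % 17 * k) % 17 = (p % 17) * (k % 17) % 17 := by
            rw [Nat.mod_eq_of_lt (show k < 17 by omega)]
      _ = (p * k) % 17 := by rw [← Nat.mul_mod]
      _ = (α ^ 2 + 17 * β ^ 2) % 17 := by rw [hk]
      _ = α ^ 2 % 17 := e1
      _ = (α % 17) ^ 2 % 17 := by rw [Nat.pow_mod]
    have hkcase : k = 1 ∨ k = 2 ∨ k = 4 ∨ k = 8 :=
      aux17 (p % 17) h17 k (by omega) (α % 17) (by omega) (by omega) hc17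
    rcases hkcase with rfl | rfl | rfl | rfl
    · rw [Nat.mul_one] at hk
      exact Or.inl ⟨α, β, hαpos, hβpos, hk.symm⟩
    · rw [Nat.mul_comm p 2] at hk
      exact Or.inr ⟨α, β, hαpos, hβpos, hk.symm⟩
    · -- k = 4 : descend
      have h8 : (α ^ 2 + 17 * β ^ 2) % 8 = 4 := by rw [hk]; omega
      have h8' : ((α % 8) ^ 2 + 17 * (β % 8) ^ 2) % 8 = 4 := by
        rw [rep_mod]; exact h8
      obtain ⟨he1, he2⟩ := aux8 (α % 8) (Nat.mod_lt _ (by norm_num)) (β % 8)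
        (Nat.mod_lt _ (by norm_num)) (Or.inl h8')
      obtain ⟨α', hα'⟩ : ∃ t, α = 2 * t := ⟨α / 2, by omega⟩
      obtain ⟨β', hβ'⟩ : ∃ t, β = 2 * t := ⟨β / 2, by omega⟩
      rw [hα', hβ'] at hk
      have hexp : (2 * α') ^ 2 + 17 * (2 * β') ^ 2 = 4 * (α' ^ 2 + 17 * β' ^ 2) := by ring
      rw [hexp] at hk
      refine Or.inl ⟨α', β', by omega, by omega, by linarith⟩
    · -- k = 8 : descend
      have h8 : (α ^ 2 + 17 * β ^ 2) % 8 = 0 := by rw [hk]; omega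
      have h8' : ((α % 8) ^ 2 + 17 * (β % 8) ^ 2) % 8 = 0 := by
        rw [rep_mod]; exact h8
      obtain ⟨he1, he2⟩ := aux8 (α % 8) (Nat.mod_lt _ (by norm_num)) (β % 8)
        (Nat.mod_lt _ (by norm_num)) (Or.inr h8')
      obtain ⟨α', hα'⟩ : ∃ t, α = 2 * t := ⟨α / 2, by omega⟩
      obtain ⟨β', hβ'⟩ : ∃ t, β = 2 * t := ⟨β / 2, by omega⟩
      rw [hα', hβ'] at hk
      have hexp : (2 * α') ^ 2 + 17 * (2 * β') ^ 2 = 4 * (α' ^ 2 + 17 * β' ^ 2) := by ring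
      rw [hexp] at hk
      refine Or.inr ⟨α', β', by omega, by omega, by linarith⟩
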